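/- Let F : ℝ₊ⁿ ⇉ ℝ₊ᵐ be an increasing co-radiant mapping taking only normal values. Then F is lower semicontinuous at every x ∈ dom(F) ∩ ℝ₊₊ⁿ, i.e., for every such x and every open set W ⊆ ℝ₊ᵐ with W ∩ F(x) ≠ ∅, there exists an open neighborhood V of x in ℝ₊ⁿ such that W ∩ F(x′) ≠ ∅ for every x′ ∈ V. -/
import Mathlib


open scoped Pointwise

/-- A set `C ⊆ ℝ₊ᵐ` is normal if `x ∈ C`, `0 ≤ y ≤ x` imply `y ∈ C`. -/
def IsNormal {m : ℕ} (C : Set (Fin m → ℝ)) : Prop :=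
  ∀ x ∈ C, ∀ y : Fin m → ℝ, 0 ≤ y → y ≤ x → y ∈ C

/-- A set-valued mapping `F : ℝ₊ⁿ ⇉ ℝ₊ᵐ` is increasing if `x ≤ y` implies `F x ⊆ F y`. -/
def IncreasingMap {n m : ℕ} (F : (Fin n → ℝ) → Set (Fin m → ℝ)) : Prop :=
  ∀ x y : Fin n → ℝ, 0 ≤ x → x ≤ y → F x ⊆ F y

/-- A set-valued mapping `F : ℝ₊ⁿ ⇉ ℝ₊ᵐ` is co-radiant if `t • F x ⊆ F (t • x)` for every
`x ∈ ℝ₊ⁿ` and `t ∈ (0, 1]`. -/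
def CoRadiantMap {n m : ℕ} (F : (Fin n → ℝ) → Set (Fin m → ℝ)) : Prop :=
  ∀ x : Fin n → ℝ, 0 ≤ x → ∀ t : ℝ, 0 < t → t ≤ 1 → t • F x ⊆ F (t • x)

/-- The graph of a set-valued mapping `F : ℝ₊ⁿ ⇉ ℝ₊ᵐ`, as a subset of `ℝ₊ⁿ × ℝ₊ᵐ`. -/
def graph {n m : ℕ} (F : (Fin n → ℝ) → Set (Fin m → ℝ)) :
    Set ((Fin n → ℝ) × (Fin m → ℝ)) :=
  {p | 0 ≤ p.1 ∧ p.2 ∈ F p.1}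

theorem stmt_8 {n m : ℕ} (F : (Fin n → ℝ) → Set (Fin m → ℝ))
    (hval : ∀ x : Fin n → ℝ, 0 ≤ x → ∀ y ∈ F x, 0 ≤ y)
    (hinc : IncreasingMap F) (hcor : CoRadiantMap F)
    (hnorm : ∀ x : Fin n → ℝ, 0 ≤ x → IsNormal (F x)) :
    ∀ x : Fin n → ℝ, (∀ i, 0 < x i) → (F x).Nonempty →
      ∀ W : Set (Fin m → ℝ), IsOpen W → (W ∩ F x).Nonempty →
        ∃ V : Set (Fin n → ℝ), IsOpen V ∧ x ∈ V ∧
          ∀ x' ∈ V, 0 ≤ x' → (W ∩ F x').Nonempty := by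
  intro x hx hFx W hW hWFx
  have hx0 : (0 : Fin n → ℝ) ≤ x := fun i => (hx i).le
  obtain ⟨y, hyW, hyF⟩ := hWFx
  -- find t ∈ (0,1) with t • y ∈ W
  have hScont : Continuous fun s : ℝ => s • y := continuous_id.smul continuous_const
  have hSopen : IsOpen {s : ℝ | s • y ∈ W} := hW.preimage hScont
  have h1 : (1 : ℝ) ∈ {s : ℝ | s • y ∈ W} := by simpa using hyW
  obtain ⟨ε, hε, hball⟩ := Metric.isOpen_iff.1 hSopen 1 h1
  set t : ℝ := max (1 - ε / 2) (1 / 2) with ht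
  have ht0 : 0 < t := lt_of_lt_of_le (by norm_num) (le_max_right _ _)
  have ht1 : t < 1 := by
    apply max_lt <;> [linarith; norm_num]
  have htW : t • y ∈ W := by
    apply hball
    rw [Metric.mem_ball, Real.dist_eq, abs_lt]
    constructor
    · have : 1 - ε / 2 ≤ t := le_max_left _ _
      linarith
    · linarith
  refine ⟨{x' | ∀ i, t * x i < x' i}, ?_, fun i => ?_, ?_⟩
  · have : {x' : Fin n → ℝ | ∀ i, t * x i < x' i} = ⋂ i, {x' | t * x i < x' i} := by
      ext x'; simp [Set.mem_iInter]
    rw [this]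
    exact isOpen_iInter_of_finite fun i =>
      isOpen_lt continuous_const (continuous_apply i)
  · nlinarith [hx i]
  · intro x' hx' hx'0
    refine ⟨t • y, htW, ?_⟩
    have h1 : t • y ∈ F (t • x) :=
      hcor x hx0 t ht0 ht1.le (Set.smul_mem_smul_set hyF)
    have h2 : (0 : Fin n → ℝ) ≤ t • x := fun i => by
      have := hx i; simp only [Pi.smul_apply, Pi.zero_apply, smul_eq_mul]; nlinarith
    exact hinc (t • x) x' h2 (fun i => (hx' i).le) h1
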